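/- Let F, G : R^3 → R and let UME_P^F denote the 3×D matrix with entries Σ_{p∈P} p_i w_j(F(p)). Suppose P₁, P₂ ⊆ R^3 finite with P₂ = R·P₁ for R ∈ SO(3), F invariant (F(Rp)=F(p) on P₁), and the matrix UME_{P₁}^F has rank 3 (D ≥ 3). Then R is uniquely determined: any rotation S with UME_{P₂}^F = S·UME_{P₁}^F equals R. -/
import Mathlib


open Finset Matrix

noncomputable instance : DecidableEq (Fin 3 → ℝ) := Classical.decEq _

/-- The discrete 3×D UME matrix of a point cloud `P` and feature `F`
with respect to functions `w j`. -/
noncomputable def discreteUME {D : ℕ} (P : Finset (Fin 3 → ℝ))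
    (F : (Fin 3 → ℝ) → ℝ) (w : Fin D → ℝ → ℝ) : Matrix (Fin 3) (Fin D) ℝ :=
  Matrix.of fun i j => ∑ p ∈ P, p i * w j (F p)

theorem discreteUME_rotation_unique {D : ℕ} (hD : 3 ≤ D)
    (R : Matrix (Fin 3) (Fin 3) ℝ)
    (hR : R ∈ Matrix.orthogonalGroup (Fin 3) ℝ) (hRdet : R.det = 1)
    (P₁ : Finset (Fin 3 → ℝ))
    (F : (Fin 3 → ℝ) → ℝ)
    (hF : ∀ p ∈ P₁, F (R.mulVec p) = F p)
    (w : Fin D → ℝ → ℝ)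
    (hrank : (discreteUME P₁ F w).rank = 3)
    (S : Matrix (Fin 3) (Fin 3) ℝ)
    (hS : S ∈ Matrix.orthogonalGroup (Fin 3) ℝ) (hSdet : S.det = 1)
    (hSU : discreteUME (P₁.image (fun p => R.mulVec p)) F w = S * discreteUME P₁ F w) :
    S = R := by
  -- R is a unit, hence mulVec by R is injective
  have hRunit : IsUnit R := by
    have h1 := Matrix.mem_orthogonalGroup_iff (Fin 3) ℝ |>.mp hR
    have h2 := Matrix.mem_orthogonalGroup_iff' (Fin 3) ℝ |>.mp hR
    exact ⟨⟨R, star R, h1, h2⟩, rfl⟩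
  have hinj : Function.Injective (fun p : Fin 3 → ℝ => R.mulVec p) :=
    Matrix.mulVec_injective_iff_isUnit.2 hRunit
  set M := discreteUME P₁ F w with hM
  -- UME of rotated cloud equals R * M
  have h1 : discreteUME (P₁.image (fun p => R.mulVec p)) F w = R * M := by
    ext i j
    have hsum : ∑ p ∈ P₁.image (fun p => R.mulVec p), p i * w j (F p)
        = ∑ p ∈ P₁, (R.mulVec p) i * w j (F (R.mulVec p)) :=
      Finset.sum_image (fun a _ b _ h => hinj h)
    simp only [discreteUME, Matrix.of_apply, Matrix.mul_apply]
    rw [hsum]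
    calc ∑ p ∈ P₁, (R.mulVec p) i * w j (F (R.mulVec p))
        = ∑ p ∈ P₁, ∑ k, R i k * (p k * w j (F p)) := by
          refine Finset.sum_congr rfl fun p hp => ?_
          rw [hF p hp]
          simp [Matrix.mulVec, dotProduct, Finset.sum_mul, mul_assoc]
      _ = ∑ k, R i k * ∑ p ∈ P₁, p k * w j (F p) := by
          rw [Finset.sum_comm]; simp [Finset.mul_sum]
      _ = ∑ k, R i k * M k j := rfl
  have hSM : S * M = R * M := by rw [← hSU, h1]
  -- range of M.mulVecLin is everything since rank 3
  have hrange : LinearMap.range M.mulVecLin = ⊤ := by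
    apply Submodule.eq_top_of_finrank_eq
    rw [← Matrix.rank, hrank]
    simp [Module.finrank_pi]
  have hvec : ∀ v : Fin 3 → ℝ, S.mulVec v = R.mulVec v := by
    intro v
    have hv : v ∈ LinearMap.range M.mulVecLin := hrange ▸ Submodule.mem_top
    obtain ⟨x, hx⟩ := hv
    have hx' : M.mulVec x = v := by rw [← Matrix.mulVecLin_apply, hx]
    have := congrArg (fun A => Matrix.mulVec A x) hSM
    simpa [← Matrix.mulVec_mulVec, hx'] using this
  ext i j
  have := congrFun (hvec (Pi.single j 1)) i
  simpa [Matrix.mulVec_single] using this
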